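/- Let R be a commutative self FP-injective ring. If R is semicoherent, then R is coherent. -/

import Mathlib

universe u

open CategoryTheory

/-- A commutative ring is *coherent* if every finitely generated ideal is finitely presented. -/
def IsCoherentRing (R : Type u) [CommRing R] : Prop :=
  ∀ I : Ideal R, I.FG → Module.FinitePresentation R I

/-- A commutative ring is *semicoherent* if for every pair of injective modules `E, F`,
the module `Hom_R(E, F)` is isomorphic to a submodule of a flat module. -/
def IsSemicoherentRing (R : Type u) [CommRing R] : Prop :=
  ∀ E F : ModuleCat.{u} R, Module.Injective R E → Module.Injective R F →
    ∃ (M : ModuleCat.{u} R) (f : (E →ₗ[R] F) →ₗ[R] M),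
      Module.Flat R M ∧ Function.Injective f

/-- A module `M` is *FP-injective* if `Ext¹_R(F, M) = 0` for every finitely presented
module `F`. -/
def IsFPInjective (R : Type u) [CommRing R] (M : Type u) [AddCommGroup M] [Module R M] : Prop :=
  ∀ F : ModuleCat.{u} R, Module.FinitePresentation R F →
    Subsingleton (((Ext R (ModuleCat.{u} R) 1).obj (Opposite.op F)).obj (ModuleCat.of R M))

/-- A commutative ring is an *IF-ring* if every injective module over it is flat. -/
def IsIFRing (R : Type u) [CommRing R] : Prop :=
  ∀ M : ModuleCat.{u} R, Module.Injective R M → Module.Flat R M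

/-- `f : M →ₗ[R] E` exhibits `E` as an injective hull (injective envelope) of `M`:
`E` is injective and `f` is an essential monomorphism. -/
def IsInjectiveHull (R : Type u) [CommRing R] (M : Type u) [AddCommGroup M] [Module R M]
    (E : Type u) [AddCommGroup E] [Module R E] (f : M →ₗ[R] E) : Prop :=
  Module.Injective R E ∧ Function.Injective f ∧
    ∀ N : Submodule R E, N ≠ ⊥ → N ⊓ LinearMap.range f ≠ ⊥

/-- A submodule is indecomposable if it is nonzero and is not the direct sum of two
nonzero submodules. -/
def IsIndecomposableSubmodule {R : Type u} [CommRing R] {M : Type u} [AddCommGroup M]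
    [Module R M] (N : Submodule R M) : Prop :=
  N ≠ ⊥ ∧ ∀ A B : Submodule R M, A ≤ N → B ≤ N → A ⊓ B = ⊥ → A ⊔ B = N → A = ⊥ ∨ B = ⊥

/-- A module has *finite Goldie dimension* if its injective hull is a finite direct sum
of indecomposable injective modules. -/
def HasFiniteGoldieDimension (R : Type u) [CommRing R] (M : Type u) [AddCommGroup M]
    [Module R M] : Prop :=
  ∃ (E : ModuleCat.{u} R) (f : M →ₗ[R] E) (n : ℕ) (N : Fin n → Submodule R E),
    IsInjectiveHull R M E f ∧ iSupIndep N ∧ (⨆ i, N i) = ⊤ ∧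
      ∀ i, IsIndecomposableSubmodule (N i) ∧ Module.Injective R (N i)

/-- A commutative ring is *arithmetical* if all its localizations at maximal ideals are
valuation rings, i.e. have totally ordered lattices of ideals. -/
def IsArithmeticalRing (R : Type u) [CommRing R] : Prop :=
  ∀ (P : Ideal R) [P.IsMaximal],
    ∀ I J : Ideal (Localization.AtPrime P), I ≤ J ∨ J ≤ I

/-- A module `M` is *finitely injective* if every homomorphism from a finitely generated
submodule `A` of an arbitrary module `B` into `M` extends to `B`. -/
def IsFinitelyInjective (R : Type u) [CommRing R] (M : Type u) [AddCommGroup M]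
    [Module R M] : Prop :=
  ∀ (B : ModuleCat.{u} R) (A : Submodule R B), A.FG →
    ∀ f : A →ₗ[R] M, ∃ g : (B : Type u) →ₗ[R] M, ∀ a : A, g a = f a


section AuxiliaryLemmas

variable {R : Type u} [CommRing R]

/-- A product of copies of an injective module is injective. -/
lemma auxPiInjective {ι : Type u} {E : Type u} [AddCommGroup E] [Module R E]
    (hE : Module.Injective R E) : Module.Injective R (ι → E) := by
  constructor
  intro X Y _ _ _ _ f hf g
  choose h hh using fun i : ι => hE.1 f hf ((LinearMap.proj i).comp g)
  exact ⟨LinearMap.pi h, fun x => funext fun i => hh i x⟩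

/-- Every ring embeds into an injective module over itself. -/
lemma auxEmbedInjective :
    ∃ (E : ModuleCat.{u} R) (e : R →ₗ[R] E), Module.Injective R E ∧ Function.Injective e := by
  let E : ModuleCat.{u} R := CategoryTheory.Injective.under (ModuleCat.of R R)
  refine ⟨E, (CategoryTheory.Injective.ι (ModuleCat.of R R)).hom, ?_, ?_⟩
  · haveI : CategoryTheory.Injective (ModuleCat.of R (↑E : Type u)) :=
      (inferInstance : CategoryTheory.Injective E)
    exact Module.injective_module_of_injective_object _ _
  · exact (ModuleCat.mono_iff_injective
      (CategoryTheory.Injective.ι (ModuleCat.of R R))).mp inferInstance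

/-- If `R` is self FP-injective, then every linear map from a finitely generated
submodule of a finite free module to `R` extends to the whole free module. -/
lemma auxKeyLift (hself : IsFPInjective R R) {ι : Type u} [Fintype ι]
    (W : Submodule R (ι → R)) (hW : W.FG) (φ : W →ₗ[R] R) :
    ∃ ψ : (ι → R) →ₗ[R] R, ∀ w : W, ψ w = φ w := by
  classical
  have hFP : Module.FinitePresentation R ((ι → R) ⧸ W) :=
    Module.finitePresentation_of_surjective W.mkQ (Submodule.mkQ_surjective W)
      (by rw [Submodule.ker_mkQ]; exact hW)
  have hext := hself (ModuleCat.of R ((ι → R) ⧸ W)) hFP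
  set Pcat : ModuleCat.{u} R := ModuleCat.of R ((ι → R) ⧸ W) with hPcat
  let Q : ProjectiveResolution Pcat := ProjectiveResolution.of Pcat
  let Rcat : ModuleCat.{u} R := ModuleCat.of R R
  let d1 : Q.complex.X 1 →ₗ[R] Q.complex.X 0 := (Q.complex.d 1 0).hom
  let d2 : Q.complex.X 2 →ₗ[R] Q.complex.X 1 := (Q.complex.d 2 1).hom
  let pi0 : Q.complex.X 0 →ₗ[R] ((ι → R) ⧸ W) := (Q.π.f 0).hom
  have hpi0 : Function.Surjective pi0 :=
    (ModuleCat.epi_iff_surjective (Q.π.f 0)).mp inferInstance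
  have hd1pi0 : ∀ x, pi0 (d1 x) = 0 := fun x =>
    LinearMap.congr_fun (congrArg ModuleCat.Hom.hom (Q.complex_d_comp_π_f_zero : _ ≫ _ = (0 : Q.complex.X 1 ⟶ _))) x
  have hexact0 : LinearMap.range d1 = LinearMap.ker pi0 := by
    have := Q.exact₀
    rwa [ShortComplex.moduleCat_exact_iff_range_eq_ker] at this
  have hd2d1 : ∀ x, d1 (d2 x) = 0 := fun x =>
    LinearMap.congr_fun (congrArg ModuleCat.Hom.hom (Q.complex.d_comp_d 2 1 0 : _ ≫ _ = (0 : Q.complex.X 2 ⟶ _))) x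
  haveI hprojQ0 : Module.Projective R (Q.complex.X 0) := by
    rw [IsProjective.iff_projective]
    exact Q.projective 0
  obtain ⟨f, hf⟩ := Module.projective_lifting_property (R := R) W.mkQ pi0
    (Submodule.mkQ_surjective W)
  obtain ⟨β, hβ⟩ := Module.projective_lifting_property (R := R) pi0 W.mkQ hpi0
  have hfc : ∀ x, W.mkQ (f x) = pi0 x := fun x => LinearMap.congr_fun hf x
  have hβc : ∀ x, pi0 (β x) = W.mkQ x := fun x => LinearMap.congr_fun hβ x
  have hτmem : ∀ x : ι → R,
      ((f ∘ₗ β) - (LinearMap.id : (ι → R) →ₗ[R] (ι → R))) x ∈ W := by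
    intro x
    have : W.mkQ (f (β x) - x) = 0 := by rw [map_sub, hfc, hβc]; simp
    rw [← Submodule.Quotient.mk_eq_zero]
    simpa using this
  let τ : (ι → R) →ₗ[R] W := LinearMap.codRestrict W
    ((f ∘ₗ β) - (LinearMap.id : (ι → R) →ₗ[R] (ι → R))) hτmem
  have hαmem : ∀ x : Q.complex.X 1, (f ∘ₗ d1) x ∈ W := by
    intro x
    have : W.mkQ (f (d1 x)) = 0 := by rw [hfc]; exact hd1pi0 x
    rw [← Submodule.Quotient.mk_eq_zero]
    simpa using this
  let α : Q.complex.X 1 →ₗ[R] W := LinearMap.codRestrict W (f ∘ₗ d1) hαmem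
  let gco : Q.complex.X 1 →ₗ[R] R := φ ∘ₗ α
  have hαd2 : ∀ x, α (d2 x) = 0 := by
    intro x
    refine Subtype.ext ?_
    show f (d1 (d2 x)) = 0
    rw [hd2d1]; simp
  have hsc : ∀ (x2 : Q.complex.X 1 ⟶ Rcat), Q.complex.d 2 1 ≫ x2 = 0 →
      ∃ x1 : Q.complex.X 0 ⟶ Rcat, Q.complex.d 1 0 ≫ x1 = x2 := by
    have hzero : Limits.IsZero ((Q.complex.linearYonedaObj R Rcat).homology 1) :=
      (ModuleCat.isZero_of_subsingleton _).of_iso (Q.isoExt 1 Rcat).symm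
    have hexactAt : (Q.complex.linearYonedaObj R Rcat).ExactAt 1 :=
      (HomologicalComplex.exactAt_iff_isZero_homology _ 1).mpr hzero
    have hsc' : (((Q.complex.linearYonedaObj R Rcat)).sc' 0 1 2).Exact :=
      (HomologicalComplex.exactAt_iff' _ 0 1 2 (by simp) (by simp)).mp hexactAt
    rw [ShortComplex.moduleCat_exact_iff] at hsc'
    intro x2 hx2
    exact hsc' x2 hx2
  let gch : Q.complex.X 1 ⟶ Rcat := ModuleCat.ofHom gco
  have hgd2 : Q.complex.d 2 1 ≫ gch = 0 := by
    apply ModuleCat.hom_ext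
    apply LinearMap.ext
    intro x
    show φ (α (d2 x)) = 0
    rw [hαd2]; simp
  obtain ⟨h, hh⟩ := hsc gch hgd2
  let hl : Q.complex.X 0 →ₗ[R] R := h.hom
  have hhc : ∀ x, hl (d1 x) = gco x := fun x => LinearMap.congr_fun (congrArg ModuleCat.Hom.hom hh) x
  refine ⟨hl ∘ₗ β - φ ∘ₗ τ, ?_⟩
  intro w
  have key : ∀ (q0 : Q.complex.X 0), pi0 q0 = 0 → ∀ (hq : f q0 ∈ W),
      hl q0 = φ ⟨f q0, hq⟩ := by
    intro q0 hq0 hq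
    have : q0 ∈ LinearMap.range d1 := by rw [hexact0]; exact hq0
    obtain ⟨q1, rfl⟩ := this
    have h2 : α q1 = ⟨f (d1 q1), hq⟩ := Subtype.ext rfl
    rw [hhc q1]
    show φ (α q1) = _
    rw [h2]
  have hβw0 : pi0 (β (w : ι → R)) = 0 := by
    rw [hβc]
    exact (Submodule.Quotient.mk_eq_zero W).mpr w.2
  have hfβw : f (β (w : ι → R)) ∈ W := by
    have h1 := hτmem (w : ι → R)
    have : f (β (w : ι → R))
        = ((f ∘ₗ β) - (LinearMap.id : (ι → R) →ₗ[R] (ι → R))) (w : ι → R) + (w : ι → R) := by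
      simp [LinearMap.sub_apply]
    rw [this]
    exact W.add_mem h1 w.2
  have hkey := key (β (w : ι → R)) hβw0 hfβw
  show hl (β (w : ι → R)) - φ (τ (w : ι → R)) = φ w
  rw [hkey]
  have hτw : (τ (w : ι → R) : ι → R) = f (β (w : ι → R)) - (w : ι → R) := rfl
  have : (⟨f (β (w : ι → R)), hfβw⟩ : W) = τ (w : ι → R) + w := by
    apply Subtype.ext
    simp [hτw]
  rw [this, map_add]
  abel

end AuxiliaryLemmas

/-- Let `R` be a commutative self FP-injective ring. If `R` is semicoherent,
then `R` is coherent. -/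
theorem semicoherent_implies_coherent_of_selfFPInjective (R : Type u) [CommRing R]
    (hself : IsFPInjective R R) (hsemi : IsSemicoherentRing R) :
    IsCoherentRing R := by
  intro I hI
  classical
  obtain ⟨n, b, hb⟩ := Submodule.fg_iff_exists_fin_generating_family.mp hI
  let g : (Fin n → R) →ₗ[R] R := Fintype.linearCombination R b
  have hrange : LinearMap.range g = I := by
    rw [Fintype.range_linearCombination]; exact hb
  set K : Submodule R (Fin n → R) := LinearMap.ker g with hKdef
  -- Main step: `K` is finitely generated.
  have hK : K.FG := by
    obtain ⟨E, e, hEinj, he⟩ := auxEmbedInjective (R := R)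
    let Lam : Type u := ↥K
    let Fcat : ModuleCat.{u} R := ModuleCat.of R (Lam → (↑E : Type u))
    have hFinj : Module.Injective R (Lam → (↑E : Type u)) := auxPiInjective hEinj
    -- the embedding of `R^K` into `Hom(E, E^K)`
    let θ : (Lam → R) →ₗ[R] ((↑E : Type u) →ₗ[R] (Lam → (↑E : Type u))) :=
      { toFun := fun x => LinearMap.pi (fun l => x l • LinearMap.id)
        map_add' := by
          intro x y
          ext v l
          simp [add_smul]
        map_smul' := by
          intro r x
          ext v l
          simp [mul_smul] }
    have hθ : Function.Injective θ := by
      refine LinearMap.ker_eq_bot.mp (LinearMap.ker_eq_bot'.mpr fun x hx =>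
        funext fun l => ?_)
      have h1 : (θ x) (e 1) l = 0 := by rw [hx]; rfl
      have h2 : (θ x) (e 1) l = e (x l) := by
        show x l • e 1 = e (x l)
        rw [← map_smul]
        simp
      show x l = (0 : R)
      apply he
      rw [← h2, h1, map_zero]
    obtain ⟨M, fM, hMflat, hfM⟩ := hsemi E Fcat hEinj hFinj
    haveI := hMflat
    let j : (Lam → R) →ₗ[R] M := fM ∘ₗ θ
    have hj : Function.Injective j := by
      rw [LinearMap.coe_comp]
      exact hfM.comp hθ
    -- the diagonal elements
    let ξ : Fin n → (Lam → R) := fun i k => (k : Fin n → R) i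
    let ι₀ : Type u := ULift.{u} (Fin n)
    let f' : ι₀ → R := fun i => b i.down
    let x' : ι₀ → (↑M : Type u) := fun i => j (ξ i.down)
    have hrel : ∑ i, f' i • x' i = 0 := by
      have h1 : ∑ i, f' i • x' i = j (∑ i : ι₀, f' i • ξ i.down) := by
        rw [map_sum]
        simp only [map_smul]
        rfl
      have h15 : (∑ i : ι₀, f' i • ξ i.down) = ∑ i : Fin n, b i • ξ i :=
        Fintype.sum_equiv (Equiv.ulift.{u, 0}) _ _ (fun i => rfl)
      have h2 : (∑ i : Fin n, b i • ξ i) = 0 := by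
        funext k
        have hk : g (k : Fin n → R) = 0 := k.2
        rw [Fintype.linearCombination_apply] at hk
        simp only [Finset.sum_apply, Pi.smul_apply, smul_eq_mul, Pi.zero_apply]
        rw [← hk]
        exact Finset.sum_congr rfl fun i _ => mul_comm _ _
      rw [h1, h15, h2, map_zero]
    obtain ⟨κ, hκ, a, y, hxy, h0⟩ : ∃ (κ : Type u) (_ : Fintype κ) (a : ι₀ → κ → R)
        (y : κ → (↑M : Type u)), (∀ i, x' i = ∑ l, a i l • y l) ∧ ∀ l, ∑ i, f' i * a i l = 0 := by
      obtain ⟨k, a, y, h1, h2⟩ := Module.Flat.isTrivialRelation_of_sum_smul_eq_zero hrel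
      exact ⟨ULift.{u} (Fin k), inferInstance, fun i l => a i l.down, fun l => y l.down,
        fun i => (h1 i).trans (Fintype.sum_equiv Equiv.ulift.symm _ _ (fun _ => rfl)),
        fun l => h2 l.down⟩
    letI := hκ
    let c : κ → (Fin n → R) := fun l i => a (ULift.up i) l
    have hcK : ∀ l, c l ∈ K := by
      intro l
      show g (c l) = 0
      rw [show g (c l) = ∑ i : Fin n, c l i • b i from Fintype.linearCombination_apply R b (c l)]
      rw [← h0 l]
      exact (Fintype.sum_equiv (Equiv.ulift.{u, 0}) (fun i : ι₀ => f' i * a i l)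
        (fun i : Fin n => c l i • b i) (fun i => mul_comm _ _)).symm
    let v : Fin n → (κ → R) := fun i l => a (ULift.up i) l
    let ρ : (Fin n → R) →ₗ[R] (κ → R) := Fintype.linearCombination R v
    let χ : (Fin n → R) →ₗ[R] (Lam → R) := Fintype.linearCombination R ξ
    have hρ_apply : ∀ (d : Fin n → R) (l : κ), ρ d l = ∑ i, d i * v i l := by
      intro d l
      rw [show ρ d = ∑ i, d i • v i from Fintype.linearCombination_apply R v d]
      simp
    have hkerle : LinearMap.ker ρ ≤ LinearMap.ker χ := by
      intro d hd
      have hd' : ∀ l, ∑ i, d i * v i l = 0 := by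
        intro l
        rw [← hρ_apply d l]
        rw [LinearMap.mem_ker] at hd
        rw [hd]
        rfl
      have hjχ : j (χ d) = 0 := by
        have h1 : j (χ d) = ∑ i : Fin n, d i • j (ξ i) := by
          rw [show χ d = ∑ i, d i • ξ i from Fintype.linearCombination_apply R ξ d]
          rw [map_sum]
          simp only [map_smul]
        rw [h1]
        have h2 : ∀ i : Fin n, j (ξ i) = ∑ l, a (ULift.up i) l • y l := fun i =>
          hxy (ULift.up i)
        calc ∑ i : Fin n, d i • j (ξ i)
            = ∑ i : Fin n, ∑ l, (d i * a (ULift.up i) l) • y l := by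
              refine Finset.sum_congr rfl fun i _ => ?_
              rw [h2 i, Finset.smul_sum]
              exact Finset.sum_congr rfl fun l _ => smul_smul _ _ _
          _ = ∑ l, (∑ i : Fin n, d i * a (ULift.up i) l) • y l := by
              rw [Finset.sum_comm]
              exact Finset.sum_congr rfl fun l _ => (Finset.sum_smul).symm
          _ = 0 := by
              refine Finset.sum_eq_zero fun l _ => ?_
              rw [show (∑ i : Fin n, d i * a (ULift.up i) l) = 0 from hd' l, zero_smul]
      rw [LinearMap.mem_ker]
      apply hj
      rw [hjχ, map_zero]
    set W : Submodule R (κ → R) := LinearMap.range ρ with hWdef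
    have hWfg : W.FG := by
      rw [hWdef, Fintype.range_linearCombination]
      exact Submodule.fg_span (Set.finite_range v)
    let χq : ((Fin n → R) ⧸ LinearMap.ker ρ) →ₗ[R] (Lam → R) :=
      Submodule.liftQ _ χ hkerle
    let φW : W →ₗ[R] (Lam → R) := χq ∘ₗ (LinearMap.quotKerEquivRange ρ).symm.toLinearMap
    have hφW : ∀ d : Fin n → R, φW ⟨ρ d, LinearMap.mem_range_self ρ d⟩ = χ d := by
      intro d
      show χq ((LinearMap.quotKerEquivRange ρ).symm ⟨ρ d, _⟩) = χ d
      have h1 : (LinearMap.quotKerEquivRange ρ) (Submodule.Quotient.mk d)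
          = ⟨ρ d, LinearMap.mem_range_self ρ d⟩ :=
        Subtype.ext (LinearMap.quotKerEquivRange_apply_mk ρ d)
      rw [← h1, LinearEquiv.symm_apply_apply]
      exact Submodule.liftQ_apply _ χ d
    have hlift := fun l : Lam => auxKeyLift hself W hWfg ((LinearMap.proj l) ∘ₗ φW)
    choose ψ hψ using hlift
    -- generators of K
    have hKspan : K = Submodule.span R (Set.range c) := by
      apply le_antisymm
      · intro k hk
        have hρsingle : ∀ i : Fin n, ρ (Pi.single i 1) = v i := by
          intro i
          have h1 : ρ (Pi.single i (1 : R)) = (1 : R) • v i :=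
            Fintype.linearCombination_apply_single R v i 1
          rw [h1, one_smul]
        have hvmem : ∀ i, v i ∈ W := fun i => by
          rw [← hρsingle i]
          exact LinearMap.mem_range_self ρ _
        have hχsingle : ∀ i : Fin n, χ (Pi.single i 1) = ξ i := by
          intro i
          have h1 : χ (Pi.single i (1 : R)) = (1 : R) • ξ i :=
            Fintype.linearCombination_apply_single R ξ i 1
          rw [h1, one_smul]
        have hφWv : ∀ i : Fin n, φW ⟨v i, hvmem i⟩ = ξ i := by
          intro i
          have h1 := hρsingle i
          have := hφW (Pi.single i 1)
          rw [hχsingle i] at this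
          rw [show (⟨v i, hvmem i⟩ : W) = ⟨ρ (Pi.single i 1), LinearMap.mem_range_self ρ _⟩
            from Subtype.ext h1.symm]
          exact this
        have hkeq : k = ∑ l, (ψ ⟨k, hk⟩ (Pi.single l 1)) • c l := by
          funext i
          have hψv : ψ ⟨k, hk⟩ (v i) = k i := by
            have := hψ ⟨k, hk⟩ ⟨v i, hvmem i⟩
            rw [this]
            show φW ⟨v i, hvmem i⟩ ⟨k, hk⟩ = k i
            rw [hφWv i]
          have hdecomp : v i = ∑ l, (v i l) • (Pi.single l (1 : R) : κ → R) := by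
            have h1 : ∀ l, (v i l) • (Pi.single l (1 : R) : κ → R)
                = (Pi.single l (v i l) : κ → R) := by
              intro l
              rw [← Pi.single_smul]
              simp
            calc v i = ∑ l, (Pi.single l (v i l) : κ → R) :=
                  (Finset.univ_sum_single (v i)).symm
              _ = ∑ l, (v i l) • (Pi.single l (1 : R) : κ → R) :=
                  Finset.sum_congr rfl fun l _ => (h1 l).symm
          have : ψ ⟨k, hk⟩ (v i) = ∑ l, v i l * ψ ⟨k, hk⟩ (Pi.single l 1) := by
            conv_lhs => rw [hdecomp]
            rw [map_sum]
            exact Finset.sum_congr rfl fun l _ => by rw [map_smul]; rfl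
          rw [← hψv, this]
          simp only [Finset.sum_apply, Pi.smul_apply, smul_eq_mul]
          exact Finset.sum_congr rfl fun l _ => mul_comm _ _
        rw [hkeq]
        exact Submodule.sum_mem _ fun l _ =>
          Submodule.smul_mem _ _ (Submodule.subset_span ⟨l, rfl⟩)
      · rw [Submodule.span_le]
        rintro _ ⟨l, rfl⟩
        exact hcK l
    rw [hKspan]
    exact Submodule.fg_span (Set.finite_range c)
  -- conclude finite presentation of `I`
  let π : (Fin n → R) →ₗ[R] I := LinearMap.codRestrict I g
    (fun x => hrange ▸ LinearMap.mem_range_self g x)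
  have hπ : Function.Surjective π := by
    rintro ⟨z, hz⟩
    rw [← hrange] at hz
    obtain ⟨x, hx⟩ := hz
    exact ⟨x, Subtype.ext hx⟩
  exact Module.finitePresentation_of_surjective π hπ
    (by rw [LinearMap.ker_codRestrict]; exact hK)
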